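/- Let B ≥ 2 be an integer base and k ≥ 1. If (a, b, c) is a digit-block triple with property P*_k, then gcd(c mod B, B) > 1 (the last base-B digit of c shares a factor greater than 1 with B); moreover, writing a_k = a mod B for the last base-B digit of a, if a_k ≠ b then gcd(|a_k − b|, B) > 1. -/

import Mathlib

/-- For a nontrivial solution of `P*_k`, the last digit of `c` shares a factor
with `B`, and if the last digit `a_k = a % B` of `a` differs from `b`, then
`|a_k − b|` also shares a factor with `B`. -/
theorem stmt_18 (B k a b c : ℕ) (hB : 2 ≤ B) (hk : 1 ≤ k)
    (ha₁ : B ^ (k - 1) ≤ a) (ha₂ : a < B ^ k) (hb : b < B) (hc : c < B ^ k)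
    (hP : (a * B + b) * c = a * (b * B ^ k + c))
    (hz : ¬(a = 0 ∧ b = 0) ∧ ¬(a = 0 ∧ c = 0) ∧ ¬(b = 0 ∧ c = 0))
    (hne : ¬(a = b * ((B ^ k - 1) / (B - 1)) ∧ c = b * ((B ^ k - 1) / (B - 1)))) :
    1 < Nat.gcd (c % B) B ∧
    (a % B ≠ b → 1 < Int.gcd ((a % B : ℤ) - (b : ℤ)) (B : ℤ)) := by
  have hBpos : 0 < B := by omega
  have ha0 : 0 < a := lt_of_lt_of_le (Nat.pow_pos hBpos) ha₁
  have hBk : 0 < B ^ k := Nat.pow_pos hBpos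
  -- key identity
  have hPZ : ((a:ℤ) * B + b) * c = a * (b * B ^ k + c) := by exact_mod_cast hP
  have keyZ : (c:ℤ) * (a * (B - 1) + b) = a * b * B ^ k := by linear_combination hPZ
  have key : c * (a * (B - 1) + b) = a * b * B ^ k := by
    have h1 : (1:ℕ) ≤ B := by omega
    zify [h1]
    linear_combination hPZ
  set X := a * (B - 1) + b with hXdef
  have hXpos : 0 < X := by
    have : 1 * 1 ≤ a * (B - 1) := Nat.mul_le_mul ha0 (by omega)
    omega
  have hBle : B ≤ B ^ k := by
    calc B = B ^ 1 := (pow_one B).symm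
    _ ≤ B ^ k := Nat.pow_le_pow_right hBpos hk
  have hXlt : X < B ^ (k + 1) := by
    have h1 : a * (B - 1) ≤ (B ^ k - 1) * (B - 1) := Nat.mul_le_mul (by omega) le_rfl
    have h2 : (B ^ k - 1) * (B - 1) = B ^ k * (B - 1) - (B - 1) := by
      rw [Nat.sub_mul, one_mul]
    have h3 : B ^ k * (B - 1) = B ^ k * B - B ^ k := by rw [Nat.mul_sub, mul_one]
    have h5 : B ^ k ≤ B ^ k * B := Nat.le_mul_of_pos_right _ hBpos
    have h6 : B ^ (k + 1) = B ^ k * B := by ring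
    omega
  constructor
  · -- first conjunct
    by_contra hg
    push_neg at hg
    have hg1 : Nat.gcd B c = 1 := by
      have hrec : Nat.gcd B c = Nat.gcd (c % B) B := Nat.gcd_rec B c
      have hpos : 0 < Nat.gcd B c := Nat.gcd_pos_of_pos_left c hBpos
      omega
    have hcop : Nat.Coprime c (B ^ k) := (Nat.Coprime.symm hg1).pow_right k
    have hdvd : B ^ k ∣ X := by
      have hd : B ^ k ∣ c * X := ⟨a * b, by rw [key]; ring⟩
      exact Nat.Coprime.dvd_of_dvd_mul_left hcop.symm hd
    obtain ⟨t, ht⟩ := hdvd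
    have hXZ : ((X : ℕ) : ℤ) = (a:ℤ) * ((B:ℤ) - 1) + b := by
      rw [hXdef]
      push_cast [Nat.cast_sub (by omega : 1 ≤ B)]
      ring
    have htZ : ((X : ℕ) : ℤ) = (B:ℤ) ^ k * t := by exact_mod_cast ht
    obtain ⟨m, hm⟩ : (B - 1) ∣ (B ^ k - 1) := by
      simpa using Nat.sub_dvd_pow_sub_pow B 1 k
    have hmZ : (B:ℤ) ^ k - 1 = ((B:ℤ) - 1) * m := by
      have : ((B ^ k - 1 : ℕ) : ℤ) = ((B - 1 : ℕ) : ℤ) * m := by exact_mod_cast hm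
      rw [Nat.cast_sub (by omega : 1 ≤ B ^ k), Nat.cast_sub (by omega : 1 ≤ B)] at this
      push_cast at this ⊢
      linarith
    have htpos : 0 < t := by
      rcases Nat.eq_zero_or_pos t with h | h
      · rw [h, Nat.mul_zero] at ht; omega
      · exact h
    have htle : t ≤ B - 1 := by
      have h1 : B ^ k * t < B ^ k * B := by
        rw [← ht]; calc X < B ^ (k+1) := hXlt
        _ = B ^ k * B := by ring
      have := Nat.lt_of_mul_lt_mul_left h1
      omega
    have hdd : ((B:ℤ) - 1) ∣ ((b:ℤ) - (t:ℤ)) :=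
      ⟨(m:ℤ) * t - a, by linear_combination (-1 : ℤ) * hXZ + htZ + (t:ℤ) * hmZ⟩
    rcases eq_or_ne b t with hbt | hbt
    · -- trivial repunit case
      subst hbt
      have hbpos : 0 < b := htpos
      have hdiv : (B ^ k - 1) / (B - 1) = m := by
        rw [hm, Nat.mul_div_cancel_left _ (by omega : 0 < B - 1)]
      have hD : ((B:ℤ) - 1) ≠ 0 := by
        have : (2:ℤ) ≤ B := by exact_mod_cast hB
        omega
      have haZ : (a:ℤ) = (b:ℤ) * m := by
        apply mul_right_cancel₀ hD
        linear_combination (-1 : ℤ) * hXZ + htZ + (b:ℤ) * hmZ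
      have ha : a = b * m := by exact_mod_cast haZ
      have hcZ : (c:ℤ) = (a:ℤ) := by
        have hne0 : ((B:ℤ) ^ k * b) ≠ 0 := by
          have h1 : (0:ℤ) < (B:ℤ) ^ k := by exact_mod_cast hBk
          have h2 : (0:ℤ) < (b:ℤ) := by exact_mod_cast hbpos
          positivity
        apply mul_right_cancel₀ hne0
        linear_combination keyZ + (c:ℤ) * hXZ - (c:ℤ) * htZ
      have hca : c = a := by exact_mod_cast hcZ
      exact hne ⟨by rw [hdiv]; exact ha, by rw [hdiv, hca]; exact ha⟩
    · -- forced b = 0, t = B - 1, leading to a = B ^ k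
      have hb0t : b = 0 ∧ t = B - 1 := by
        have hne0 : (b:ℤ) - t ≠ 0 := by
          intro h
          exact hbt (by exact_mod_cast sub_eq_zero.mp h)
        have h1 : ((B:ℤ) - 1) ≤ |(b:ℤ) - t| :=
          Int.le_of_dvd (abs_pos.mpr hne0) ((dvd_abs _ _).mpr hdd)
        have hbZ : (b:ℤ) < B := by exact_mod_cast hb
        have htZ' : (t:ℤ) ≤ (B:ℤ) - 1 := by
          have : (t:ℤ) ≤ ((B - 1 : ℕ) : ℤ) := by exact_mod_cast htle
          rw [Nat.cast_sub (by omega : 1 ≤ B)] at this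
          exact_mod_cast this
        have htZ'' : (1:ℤ) ≤ t := by exact_mod_cast htpos
        rcases le_or_gt ((b:ℤ)) (t:ℤ) with h | h
        · rw [abs_of_nonpos (by omega)] at h1
          constructor <;> [skip; skip] <;> omega
        · rw [abs_of_pos (by omega)] at h1
          omega
      obtain ⟨hb0, ht1⟩ := hb0t
      have hXe : a * (B - 1) + b = B ^ k * t := by rw [← hXdef]; exact ht
      rw [hb0, ht1] at hXe
      have : a * (B - 1) = B ^ k * (B - 1) := by omega
      have := Nat.eq_of_mul_eq_mul_right (by omega : 0 < B - 1) this
      omega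
  · intro hab
    by_contra hg
    push_neg at hg
    have hg1 : Int.gcd ((a:ℤ) % (B:ℤ) - (b:ℤ)) (B:ℤ) = 1 := by
      have h0 : 0 < Int.gcd ((a:ℤ) % (B:ℤ) - (b:ℤ)) (B:ℤ) :=
        Int.gcd_pos_of_ne_zero_right _ (by exact_mod_cast (by omega : (B:ℤ) ≠ 0))
      omega
    -- show Nat.Coprime X B
    have hXB : Nat.Coprime X B := by
      have g := Nat.gcd X B
      set g := Nat.gcd X B with hgdef
      have hgX : (g:ℤ) ∣ (X:ℤ) := Int.natCast_dvd_natCast.mpr (Nat.gcd_dvd_left X B)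
      have hgB : (g:ℤ) ∣ (B:ℤ) := Int.natCast_dvd_natCast.mpr (Nat.gcd_dvd_right X B)
      have hgd : (g:ℤ) ∣ ((a:ℤ) % (B:ℤ) - (b:ℤ)) := by
        have hc1 : ((X : ℕ) : ℤ) = (a:ℤ) * ((B:ℤ) - 1) + b := by
          rw [hXdef]
          push_cast [Nat.cast_sub (by omega : 1 ≤ B)]
          ring
        have heq : (a:ℤ) % (B:ℤ) - (b:ℤ) = (B:ℤ) * ((a:ℤ) - (a:ℤ)/(B:ℤ)) - (X:ℤ) := by
          rw [Int.emod_def, hc1]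
          ring
        rw [heq]
        exact dvd_sub (Dvd.dvd.mul_right hgB _) hgX
      have : (g:ℤ) ∣ (1:ℤ) := by
        have := Int.dvd_coe_gcd hgd hgB
        rwa [hg1, Nat.cast_one] at this
      have : g = 1 := by exact_mod_cast Int.eq_one_of_dvd_one (by positivity) this
      exact this
    have hdc : B ^ k ∣ c := by
      have hd : B ^ k ∣ c * X := ⟨a * b, by rw [key]; ring⟩
      exact Nat.Coprime.dvd_of_dvd_mul_right (hXB.symm.pow_left k) hd
    have hc0 : c = 0 := Nat.eq_zero_of_dvd_of_lt hdc hc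
    have hb0 : b = 0 := by
      have : a * b * B ^ k = 0 := by rw [← key, hc0]; ring
      rcases Nat.mul_eq_zero.mp this with h | h
      · rcases Nat.mul_eq_zero.mp h with h' | h' <;> omega
      · omega
    exact hz.2.2 ⟨hb0, hc0⟩
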